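/- In the algebra U_q(iso_2), the generators I and T2 satisfy the Serre-type relation I T2^2 - (q+q^{-1}) T2 I T2 + T2^2 I = 0. -/

import Mathlib

/-- In U_q(iso₂), the generators I and T2 satisfy the Serre-type relation
I T2² - (q+q⁻¹) T2 I T2 + T2² I = 0. -/
theorem stmt1 (q sq : ℂ) (hq : q ≠ 0) (hsq : sq ^ 2 = q)
    (A : Type*) [Ring A] [Algebra ℂ A] (I T1 T2 : A)
    (h1 : sq • (I * T2) - sq⁻¹ • (T2 * I) = T1)
    (h2 : sq • (T1 * I) - sq⁻¹ • (I * T1) = T2)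
    (h3 : sq • (T2 * T1) - sq⁻¹ • (T1 * T2) = 0) :
    I * T2 ^ 2 - (q + q⁻¹) • (T2 * I * T2) + T2 ^ 2 * I = 0 := by
  have hs : sq ≠ 0 := by
    rintro rfl
    exact hq (hsq.symm.trans (by ring))
  subst h1
  simp only [mul_sub, sub_mul, smul_sub, mul_smul_comm, smul_mul_assoc, smul_smul] at h3
  rw [show I * T2 ^ 2 - (q + q⁻¹) • (T2 * I * T2) + T2 ^ 2 * I =
    -((sq * sq) • (T2 * (I * T2)) - (sq * sq⁻¹) • (T2 * (T2 * I)) -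
      ((sq⁻¹ * sq) • (I * T2 * T2) - (sq⁻¹ * sq⁻¹) • (T2 * I * T2))) from ?_, h3, neg_zero]
  have e1 : sq * sq = q := by rw [← hsq]; ring
  have e2 : sq * sq⁻¹ = 1 := mul_inv_cancel₀ hs
  have e3 : sq⁻¹ * sq = 1 := inv_mul_cancel₀ hs
  have e4 : sq⁻¹ * sq⁻¹ = q⁻¹ := by rw [← hsq]; field_simp
  rw [e1, e2, e3, e4, one_smul, one_smul, pow_two, mul_assoc, mul_assoc, add_smul]
  simp only [mul_assoc]
  abel
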